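/- Under the assumptions of the one-step Elo update map E with KL < 1, for all x, y ∈ R^N one has ‖E(x) − E(y)‖ ≤ ‖x − y‖; i.e., the simultaneous Elo update with identical match data is a (weak) contraction in Euclidean norm. -/

import Mathlib

set_option maxHeartbeats 1000000


theorem stmt_3 (N : ℕ) (hN : 2 ≤ N) (i j : Fin N) (hij : i ≠ j)
    (s : ℝ) (hs : s ∈ Set.Icc (-1 : ℝ) 1)
    (b : ℝ → ℝ) (hb_mono : StrictMono b)
    (hb_range : ∀ u, b u ∈ Set.Ioo (-1 : ℝ) 1)
    (L : ℝ) (hL : 0 ≤ L) (hb_lip : ∀ u v, |b u - b v| ≤ L * |u - v|)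
    (K : ℝ) (hK : 0 < K) (hKL : K * L < 1)
    (E : EuclideanSpace ℝ (Fin N) → EuclideanSpace ℝ (Fin N))
    (hE : ∀ x, E x = x + (K * (s - b (x i - x j))) •
      (EuclideanSpace.single i (1 : ℝ) - EuclideanSpace.single j (1 : ℝ))) :
    ∀ x y : EuclideanSpace ℝ (Fin N), ‖E x - E y‖ ≤ ‖x - y‖ := by
  intro x y
  set w : EuclideanSpace ℝ (Fin N) :=
    EuclideanSpace.single i (1 : ℝ) - EuclideanSpace.single j (1 : ℝ) with hw
  set u : ℝ := x i - x j with hu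
  set v : ℝ := y i - y j with hv
  set c : ℝ := K * (b v - b u) with hc
  set d : EuclideanSpace ℝ (Fin N) := x - y with hd
  have hExy : E x - E y = d + c • w := by
    rw [hE, hE]
    simp only [hd, hc, hw, ← hu, ← hv]
    module
  -- inner products
  have hiw : (inner ℝ d w : ℝ) = u - v := by
    simp only [hw, inner_sub_right]
    rw [EuclideanSpace.inner_single_right, EuclideanSpace.inner_single_right]
    simp [hd, hu, hv]
    ring
  have hww : (inner ℝ w w : ℝ) = 2 := by
    simp only [hw, inner_sub_right, inner_sub_left]
    rw [EuclideanSpace.inner_single_right, EuclideanSpace.inner_single_right,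
      EuclideanSpace.inner_single_right, EuclideanSpace.inner_single_right]
    simp [EuclideanSpace.single_apply, hij, Ne.symm hij]
    ring
  have hnw : ‖w‖ ^ 2 = 2 := by
    rw [← real_inner_self_eq_norm_sq, hww]
  have hsq : ‖E x - E y‖ ^ 2 = ‖d‖ ^ 2 + 2 * (c * (u - v)) + c ^ 2 * 2 := by
    rw [hExy, norm_add_sq_real, real_inner_smul_right, hiw, norm_smul, mul_pow, ← hnw]
    simp [sq_abs]
  -- sign fact
  have hsign : 0 ≤ (b u - b v) * (u - v) := by
    rcases lt_trichotomy u v with h | h | h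
    · have := hb_mono h; nlinarith
    · simp [h]
    · have := hb_mono h; nlinarith
  have habs : |b u - b v| ≤ L * |u - v| := hb_lip u v
  have h1 : |b u - b v| * |u - v| = (b u - b v) * (u - v) := by
    rw [← abs_mul, abs_of_nonneg hsign]
  have hkey : 2 * (c * (u - v)) + c ^ 2 * 2 ≤ 0 := by
    have key2 : K ^ 2 * (b u - b v) ^ 2 ≤ K * ((b u - b v) * (u - v)) := by
      calc K ^ 2 * (b u - b v) ^ 2 = K ^ 2 * (|b u - b v| * |b u - b v|) := by
            rw [abs_mul_abs_self]; ring
        _ ≤ K ^ 2 * (|b u - b v| * (L * |u - v|)) := by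
            apply mul_le_mul_of_nonneg_left
              (mul_le_mul_of_nonneg_left habs (abs_nonneg _)) (by positivity)
        _ = (K * L) * (K * (|b u - b v| * |u - v|)) := by ring
        _ = (K * L) * (K * ((b u - b v) * (u - v))) := by rw [h1]
        _ ≤ 1 * (K * ((b u - b v) * (u - v))) := by
            apply mul_le_mul_of_nonneg_right hKL.le (by positivity)
        _ = K * ((b u - b v) * (u - v)) := one_mul _
    have hcr : 2 * (c * (u - v)) + c ^ 2 * 2 =
        2 * (K ^ 2 * (b u - b v) ^ 2) - 2 * (K * ((b u - b v) * (u - v))) := by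
      rw [hc]; ring
    linarith
  have hfinal : ‖E x - E y‖ ^ 2 ≤ ‖x - y‖ ^ 2 := by
    rw [hsq, ← hd]
    linarith
  exact (pow_le_pow_iff_left₀ (norm_nonneg _) (norm_nonneg _) two_ne_zero).mp hfinal
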